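/- Let X and Y be topological spaces and F a family of functions from X to Y. If F is weakly discontinuous, then its decomposition number satisfies Dec(F) ≤ hl(X). -/

import Mathlib

open Set Filter Topology Cardinal

/-- A function is scatteredly continuous if every nonempty subset `A` of the domain
contains a point at which the restriction `f|A` is continuous. -/
def ScatCont {X Y : Type*} [TopologicalSpace X] [TopologicalSpace Y] (f : X → Y) : Prop :=
  ∀ A : Set X, A.Nonempty → ∃ a ∈ A, ContinuousWithinAt f A a

/-- A family of functions is scatteredly continuous if every nonempty subset `A` of the domain
contains a point at which all restrictions `f|A`, `f ∈ F`, are continuous. -/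
def ScatContFam {X Y : Type*} [TopologicalSpace X] [TopologicalSpace Y]
    (F : Set (X → Y)) : Prop :=
  ∀ A : Set X, A.Nonempty → ∃ a ∈ A, ∀ f ∈ F, ContinuousWithinAt f A a

/-- A function is weakly discontinuous if every subset `A` of the domain contains an
open (in `A`) dense (in `A`) subset `U` such that `f|U` is continuous. -/
def WeaklyDisc {X Y : Type*} [TopologicalSpace X] [TopologicalSpace Y] (f : X → Y) : Prop :=
  ∀ A : Set X, ∃ U : Set X, U ⊆ A ∧ (∃ V : Set X, IsOpen V ∧ U = V ∩ A) ∧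
    A ⊆ closure U ∧ ContinuousOn f U

/-- A family of functions is weakly discontinuous if every subset `A` of the domain contains an
open (in `A`) dense (in `A`) subset `U` such that every `f|U`, `f ∈ F`, is continuous. -/
def WeaklyDiscFam {X Y : Type*} [TopologicalSpace X] [TopologicalSpace Y]
    (F : Set (X → Y)) : Prop :=
  ∀ A : Set X, ∃ U : Set X, U ⊆ A ∧ (∃ V : Set X, IsOpen V ∧ U = V ∩ A) ∧
    A ⊆ closure U ∧ ∀ f ∈ F, ContinuousOn f U

/-- The decomposition number of a family `F` of functions: the smallest cardinality of a
cover `𝒞` of `X` such that every `f ∈ F` restricted to every `C ∈ 𝒞` is continuous. -/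
noncomputable def Dec {X Y : Type*} [TopologicalSpace X] [TopologicalSpace Y]
    (F : Set (X → Y)) : Cardinal :=
  sInf { c : Cardinal | ∃ 𝒞 : Set (Set X), c = #𝒞 ∧ ⋃₀ 𝒞 = Set.univ ∧
    ∀ C ∈ 𝒞, ∀ f ∈ F, ContinuousOn f C }

/-- The Lindelöf number: the smallest infinite cardinal `κ` such that every open cover
has a subcover of cardinality `≤ κ`. -/
noncomputable def lindelofNum (X : Type*) [TopologicalSpace X] : Cardinal :=
  sInf { κ : Cardinal | Cardinal.aleph0 ≤ κ ∧ ∀ 𝒰 : Set (Set X), (∀ U ∈ 𝒰, IsOpen U) →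
    ⋃₀ 𝒰 = Set.univ → ∃ 𝒱 ⊆ 𝒰, #𝒱 ≤ κ ∧ ⋃₀ 𝒱 = Set.univ }

/-- The hereditary Lindelöf number: the supremum of the Lindelöf numbers of all subspaces. -/
noncomputable def heredLindelofNum (X : Type*) [TopologicalSpace X] : Cardinal :=
  ⨆ Z : Set X, lindelofNum Z

/-- A network for a topological space: a family of (arbitrary) sets such that every open
neighbourhood of every point contains a member of the family containing that point. -/
def IsNetwork {X : Type*} [TopologicalSpace X] (N : Set (Set X)) : Prop :=
  ∀ (x : X) (U : Set X), IsOpen U → x ∈ U → ∃ n ∈ N, x ∈ n ∧ n ⊆ U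

/-- The network weight: the smallest infinite cardinality of a network. -/
noncomputable def netWt (X : Type*) [TopologicalSpace X] : Cardinal :=
  sInf { c : Cardinal | ∃ N : Set (Set X), IsNetwork N ∧ c = max #N Cardinal.aleph0 }

/-- The weight: the smallest infinite cardinality of a base of the topology. -/
noncomputable def wt (X : Type*) [TopologicalSpace X] : Cardinal :=
  sInf { c : Cardinal | ∃ B : Set (Set X), TopologicalSpace.IsTopologicalBasis B ∧
    c = max #B Cardinal.aleph0 }

/-- The density: the smallest cardinality of a dense subset. -/
noncomputable def dens (X : Type*) [TopologicalSpace X] : Cardinal :=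
  sInf { c : Cardinal | ∃ D : Set X, Dense D ∧ c = #D }

/-- The hereditary density: the supremum of densities of all subspaces. -/
noncomputable def heredDens (X : Type*) [TopologicalSpace X] : Cardinal :=
  ⨆ Z : Set X, dens Z

/-- The spread: the supremum of cardinalities of discrete subspaces. -/
noncomputable def spread (X : Type*) [TopologicalSpace X] : Cardinal :=
  sSup { c : Cardinal | ∃ D : Set X, DiscreteTopology D ∧ c = #D }

/-- A subset `C` of a topological vector space over `ℝ` is σ-convex if for every sequence
`(x n)` in `C` and every sequence `(t n)` of positive reals with `∑ n, t n = 1`, the series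
`∑ n, t n • x n` converges to a point of `C`. -/
def SigmaConvex {L : Type*} [AddCommGroup L] [Module ℝ L] [TopologicalSpace L]
    (C : Set L) : Prop :=
  ∀ (x : ℕ → L) (t : ℕ → ℝ), (∀ n, x n ∈ C) → (∀ n, 0 < t n) →
    Tendsto (fun N => ∑ n ∈ Finset.range N, t n) atTop (𝓝 1) →
    ∃ c ∈ C, Tendsto (fun N => ∑ n ∈ Finset.range N, t n • x n) atTop (𝓝 c)

/-- A topological space has countable tightness if every point in the closure of a set `A`
lies in the closure of a countable subset of `A`. -/
def CountablyTight (X : Type*) [TopologicalSpace X] : Prop :=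
  ∀ (A : Set X) (a : X), a ∈ closure A → ∃ B ⊆ A, B.Countable ∧ a ∈ closure B

universe u

section AuxTSeq

variable {X : Type u}

/-- Transfinite "remainder" sequence: `TSeq U α` removes from `univ` all earlier
chosen relatively-open-dense pieces. -/
noncomputable def TSeq (U : Set X → Set X) : Ordinal.{u} → Set X :=
  Ordinal.lt_wf.fix fun α ih => Set.univ \ ⋃ β : Set.Iio α, U (ih β.1 β.2)

theorem TSeq_eq (U : Set X → Set X) (α : Ordinal.{u}) :
    TSeq U α = Set.univ \ ⋃ β : Set.Iio α, U (TSeq U β.1) := by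
  rw [TSeq, WellFounded.fix_eq]

theorem TSeq_anti (U : Set X → Set X) {α β : Ordinal.{u}} (h : α ≤ β) :
    TSeq U β ⊆ TSeq U α := by
  rw [TSeq_eq U α, TSeq_eq U β]
  refine diff_subset_diff_right (iUnion_subset fun γ => ?_)
  exact subset_iUnion (fun δ : Set.Iio β => U (TSeq U δ.1)) ⟨γ.1, lt_of_lt_of_le γ.2 h⟩

theorem TSeq_disj (U : Set X → Set X) {α β : Ordinal.{u}} (h : α < β) {x : X}
    (hx : x ∈ TSeq U β) : x ∉ U (TSeq U α) := by
  rw [TSeq_eq U β] at hx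
  intro hmem
  exact hx.2 (mem_iUnion.2 ⟨⟨α, h⟩, hmem⟩)

end AuxTSeq

/-- The Lindelöf number is a member of its defining set. -/
theorem lindelofNum_spec (W : Type*) [TopologicalSpace W] :
    Cardinal.aleph0 ≤ lindelofNum W ∧ ∀ 𝒰 : Set (Set W), (∀ U ∈ 𝒰, IsOpen U) →
      ⋃₀ 𝒰 = Set.univ → ∃ 𝒱 ⊆ 𝒰, #𝒱 ≤ lindelofNum W ∧ ⋃₀ 𝒱 = Set.univ := by
  have hmem : max #(Set W) Cardinal.aleph0 ∈
      { κ : Cardinal | Cardinal.aleph0 ≤ κ ∧ ∀ 𝒰 : Set (Set W), (∀ U ∈ 𝒰, IsOpen U) →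
        ⋃₀ 𝒰 = Set.univ → ∃ 𝒱 ⊆ 𝒰, #𝒱 ≤ κ ∧ ⋃₀ 𝒱 = Set.univ } := by
    refine ⟨le_max_right _ _, fun 𝒰 _ hc => ⟨𝒰, subset_rfl, ?_, hc⟩⟩
    exact (Cardinal.mk_set_le 𝒰).trans (le_max_left _ _)
  exact csInf_mem ⟨_, hmem⟩

/-- Every weakly discontinuous family `F` of functions between topological spaces `X`, `Y`
has decomposition number `Dec(F) ≤ hl(X)`. -/
theorem stmt8 {X Y : Type*} [TopologicalSpace X] [TopologicalSpace Y]
    (F : Set (X → Y)) (h : WeaklyDiscFam F) :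
    Dec F ≤ heredLindelofNum X := by
  classical
  choose U hUsub hVex hUdense hUcont using h
  choose V hVopen hUV using hVex
  -- nonempty sets have nonempty dense-open pieces
  have hUne : ∀ A : Set X, A.Nonempty → (U A).Nonempty := by
    rintro A ⟨a, ha⟩
    have hcl := hUdense A ha
    rcases Set.eq_empty_or_nonempty (U A) with h0 | h0
    · rw [h0, closure_empty] at hcl; exact absurd hcl (Set.notMem_empty a)
    · exact h0
  set T : Ordinal → Set X := TSeq U with hT
  -- the sequence eventually vanishes
  have hex : ∃ α : Ordinal, T α = ∅ := by
    by_contra hcon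
    push_neg at hcon
    have hne : ∀ α : Ordinal, (U (T α)).Nonempty := fun α => hUne _ (hcon α)
    set o := (Order.succ #X).ord with ho
    set x : Set.Iio o → X := fun β => (hne β.1).choose with hxdef
    have hx : ∀ β : Set.Iio o, x β ∈ U (T β.1) := fun β => (hne β.1).choose_spec
    have hlt : ∀ β γ : Set.Iio o, β.1 < γ.1 → x β ≠ x γ := by
      intro β γ hβγ heq
      have h1 : x γ ∈ T γ.1 := hUsub _ (hx γ)
      have h2 : x γ ∉ U (T β.1) := TSeq_disj U hβγ h1
      exact h2 (heq ▸ hx β)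
    have hinj : Function.Injective x := by
      intro β γ heq
      rcases lt_trichotomy β.1 γ.1 with hc | hc | hc
      · exact absurd heq (hlt β γ hc)
      · exact Subtype.ext hc
      · exact absurd heq.symm (hlt γ β hc)
    have hle : Cardinal.lift #(Set.Iio o) ≤ Cardinal.lift #X :=
      Cardinal.lift_mk_le'.2 ⟨⟨x, hinj⟩⟩
    rw [Ordinal.mk_Iio_ordinal, Cardinal.lift_lift, Cardinal.card_ord,
      Cardinal.lift_succ] at hle
    exact (Order.succ_le_iff.1 hle).false
  set lam := sInf {α : Ordinal | T α = ∅} with hlamdef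
  have hlam0 : T lam = ∅ := csInf_mem hex
  have hlammin : ∀ β : Ordinal, β < lam → (T β).Nonempty := by
    intro β hβ
    rw [Set.nonempty_iff_ne_empty]
    intro h0
    exact hβ.not_ge (csInf_le' h0)
  -- the candidate cover
  set 𝒞 : Set (Set X) := Set.range (fun β : Set.Iio lam => U (T β.1)) with h𝒞
  have hcover : ⋃₀ 𝒞 = Set.univ := by
    rw [h𝒞, Set.sUnion_range]
    have heq := TSeq_eq U lam
    rw [← hT, hlam0, eq_comm, Set.eq_empty_iff_forall_notMem] at heq
    ext p
    simp only [Set.mem_iUnion, Set.mem_univ, iff_true]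
    have hp := heq p
    simp only [Set.mem_diff, Set.mem_univ, true_and, not_not, Set.mem_iUnion] at hp
    exact hp
  have hmem : #𝒞 ∈ { c : Cardinal | ∃ 𝒞' : Set (Set X), c = #𝒞' ∧ ⋃₀ 𝒞' = Set.univ ∧
      ∀ C ∈ 𝒞', ∀ f ∈ F, ContinuousOn f C } := by
    refine ⟨𝒞, rfl, hcover, ?_⟩
    rintro C ⟨β, rfl⟩ f hf
    exact hUcont _ f hf
  have hDec : Dec F ≤ #𝒞 := csInf_le' hmem
  -- cardinality of the cover
  have hcard : #𝒞 ≤ lam.card := by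
    have h1 := Cardinal.mk_range_le_lift (f := fun β : Set.Iio lam => U (T β.1))
    rw [Ordinal.mk_Iio_ordinal, Cardinal.lift_lift] at h1
    rw [← Cardinal.lift_le]
    exact h1
  refine hDec.trans (hcard.trans ?_)
  -- main claim: lam.card ≤ heredLindelofNum X
  set μ := heredLindelofNum X with hμdef
  have hμZ : ∀ Z : Set X, lindelofNum Z ≤ μ := fun Z =>
    le_ciSup (Cardinal.bddAbove_range _) Z
  have hμℵ₀ : Cardinal.aleph0 ≤ μ :=
    (lindelofNum_spec (∅ : Set X)).1.trans (hμZ ∅)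
  by_contra hcon
  push_neg at hcon
  -- hcon : μ < lam.card
  have hκreg := Cardinal.isRegular_succ hμℵ₀
  set o := (Order.succ μ).ord with ho
  have holim : Order.IsSuccLimit o :=
    Cardinal.isSuccLimit_ord (hμℵ₀.trans (Order.lt_succ μ).le)
  have hole : o ≤ lam := Cardinal.ord_le.2 (Order.succ_le_of_lt hcon)
  have hone : ∀ β : Set.Iio o, (U (T β.1)).Nonempty := fun β =>
    hUne _ (hlammin β.1 (lt_of_lt_of_le β.2 hole))
  set x : Set.Iio o → X := fun β => (hone β).choose with hxdef
  have hxmem : ∀ β, x β ∈ U (T β.1) := fun β => (hone β).choose_spec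
  set Z : Set X := Set.range x with hZ
  set 𝒰 : Set (Set Z) :=
    Set.range (fun β : Set.Iio o => (Subtype.val ⁻¹' (V (T β.1)) : Set Z)) with h𝒰
  have h𝒰open : ∀ W ∈ 𝒰, IsOpen W := by
    rintro W ⟨β, rfl⟩
    exact (hVopen _).preimage continuous_subtype_val
  have h𝒰cov : ⋃₀ 𝒰 = Set.univ := by
    rw [h𝒰, Set.sUnion_range]
    ext z
    simp only [Set.mem_iUnion, Set.mem_univ, iff_true]
    obtain ⟨β, hβ⟩ := z.2
    refine ⟨β, ?_⟩
    show z.1 ∈ V (T β.1)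
    have hm := hxmem β
    rw [hUV] at hm
    rw [← hβ]
    exact hm.1
  obtain ⟨𝒱, h𝒱sub, h𝒱card, h𝒱cov⟩ := (lindelofNum_spec Z).2 𝒰 h𝒰open h𝒰cov
  have h𝒱μ : #𝒱 < Order.succ μ :=
    lt_of_le_of_lt (h𝒱card.trans (hμZ Z)) (Order.lt_succ μ)
  choose b hb using fun v : ↥𝒱 => (h𝒱sub v.2 : v.1 ∈ 𝒰)
  set γ : Ordinal := ⨆ v : ↥𝒱, Order.succ (b v).1 with hγdef
  have hγ : γ < o := by
    refine Ordinal.iSup_lt_ord ?_ fun v => holim.succ_lt (b v).2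
    rw [hκreg.cof_eq]
    exact h𝒱μ
  have hγZ : x ⟨γ, hγ⟩ ∈ Z := ⟨⟨γ, hγ⟩, rfl⟩
  have hcovγ : (⟨x ⟨γ, hγ⟩, hγZ⟩ : Z) ∈ ⋃₀ 𝒱 := h𝒱cov ▸ Set.mem_univ _
  obtain ⟨v, hv𝒱, hvx⟩ := hcovγ
  have hveq := hb ⟨v, hv𝒱⟩
  rw [show ((⟨v, hv𝒱⟩ : ↥𝒱) : Set Z) = v from rfl] at hveq
  rw [← hveq] at hvx
  set β : Ordinal := (b ⟨v, hv𝒱⟩).1 with hβdef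
  have hvx' : x ⟨γ, hγ⟩ ∈ V (T β) := hvx
  have hβγ : β < γ :=
    lt_of_lt_of_le (Order.lt_succ β) (Ordinal.le_iSup (fun v : ↥𝒱 => Order.succ (b v).1) ⟨v, hv𝒱⟩)
  have h1 : x ⟨γ, hγ⟩ ∈ T γ := hUsub _ (hxmem ⟨γ, hγ⟩)
  have h2 : x ⟨γ, hγ⟩ ∈ T β := TSeq_anti U hβγ.le h1
  have h3 : x ⟨γ, hγ⟩ ∈ U (T β) := by rw [hUV]; exact ⟨hvx', h2⟩
  exact TSeq_disj U hβγ h1 h3
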